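/- In any algebra (S,*,') satisfying the three axioms, the identity x''' * x = x''' * x'' holds for all x in S. -/
import Mathlib

theorem stmt (S : Type*) (m : S → S → S) (i : S → S)
    (E1 : ∀ x, m (m x (i x)) x = x)
    (E2 : ∀ x y, m (m x (i x)) (m (i y) y) = m (m (i y) y) (m x (i x)))
    (E3 : ∀ x y z, m (m x y) z = m x (m y (i (i z)))) :
    ∀ x, m (i (i (i x))) x = m (i (i (i x))) (i (i x)) := by
  intro x
  have hL : m (i (i (i x))) x = (m (m (m (m (m (i (i (i x))) (i (i (i (i x))))) (i (i (i x)))) (i (i x))) (i x)) x) := by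
    calc m (i (i (i x))) x
        = m (m (m (i (i (i x))) (i (i (i (i x))))) (i (i (i x)))) x := by simp only [E1]
      _ = m (m (m (i (i (i x))) (i (i (i (i x))))) (m (m (i (i (i x))) (i (i (i (i x))))) (i (i (i x))))) x := by simp only [E1]
      _ = m (m (m (m (i (i (i x))) (i (i (i (i x))))) (m (i (i (i x))) (i (i (i (i x)))))) (i x)) x := by rw [E3 (m (i (i (i x))) (i (i (i (i x))))) (m (i (i (i x))) (i (i (i (i x))))) (i x)]
      _ = m (m (m (m (m (i (i (i x))) (i (i (i (i x))))) (i (i (i x)))) (i (i x))) (i x)) x := by rw [E3 (m (i (i (i x))) (i (i (i (i x))))) (i (i (i x))) (i (i x))]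
  have hR : m (i (i (i x))) (i (i x)) = (m (m (m (m (m (i (i (i x))) (i (i (i (i x))))) (i (i (i x)))) (i (i x))) (i x)) x) := by
    calc m (i (i (i x))) (i (i x))
        = m (m (m (i (i (i x))) (i (i (i (i x))))) (i (i (i x)))) (i (i x)) := by simp only [E1]
      _ = m (m (m (i (i (i x))) (i (i (i (i x))))) (i (i (i x)))) (m (m (i (i x)) (i (i (i x)))) (i (i x))) := by simp only [E1]
      _ = m (m (m (m (i (i (i x))) (i (i (i (i x))))) (i (i (i x)))) (m (i (i x)) (i (i (i x))))) x := by rw [E3 (m (m (i (i (i x))) (i (i (i (i x))))) (i (i (i x)))) (m (i (i x)) (i (i (i x)))) x]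
      _ = m (m (m (m (m (i (i (i x))) (i (i (i (i x))))) (i (i (i x)))) (i (i x))) (i x)) x := by rw [E3 (m (m (i (i (i x))) (i (i (i (i x))))) (i (i (i x)))) (i (i x)) (i x)]
  rw [hL, hR]
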